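/- Let n ≥ 1 and let x be an integer with 4 < x ≤ n. The number of equi-n-squares ω with X_n(ω) = x, i.e. with exactly x consecutive or reverse-consecutive lines (rows plus columns), equals 2^{x+1} · C(n,x) · Σ_{k=0}^{n−x} (−2)^k · C(n−x,k) · (n²−n·x−n·k)! / ((n−x−k)!)^n, as an equality of rational numbers. -/

import Mathlib

open Nat Finset Filter

/-- An equi-`n`-square: an `n × n` array with entries in `Fin n` in which
every value appears exactly `n` times. -/
def IsEquiSquare (n : ℕ) (g : Fin n → Fin n → Fin n) : Prop :=
  ∀ k : Fin n, Nat.card {p : Fin n × Fin n // g p.1 p.2 = k} = n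

/-- Row `i` is consecutive (1-indexed: entry in column `j` is `j`). -/
def RowConsec {n : ℕ} (g : Fin n → Fin n → Fin n) (i : Fin n) : Prop :=
  ∀ j : Fin n, g i j = j

/-- Row `i` is reverse-consecutive (1-indexed: entry in column `j` is `n+1-j`). -/
def RowRevConsec {n : ℕ} (g : Fin n → Fin n → Fin n) (i : Fin n) : Prop :=
  ∀ j : Fin n, (g i j : ℕ) + (j : ℕ) + 1 = n

/-- Column `j` is consecutive (1-indexed: entry in row `i` is `i`). -/
def ColConsec {n : ℕ} (g : Fin n → Fin n → Fin n) (j : Fin n) : Prop :=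
  ∀ i : Fin n, g i j = i

/-- Column `j` is reverse-consecutive (1-indexed: entry in row `i` is `n+1-i`). -/
def ColRevConsec {n : ℕ} (g : Fin n → Fin n → Fin n) (j : Fin n) : Prop :=
  ∀ i : Fin n, (g i j : ℕ) + (i : ℕ) + 1 = n

/-- `X_n(g)`: the number of consecutive or reverse-consecutive lines (rows plus columns)
of the array `g`. -/
noncomputable def consecLineCount {n : ℕ} (g : Fin n → Fin n → Fin n) : ℕ :=
  Nat.card {i : Fin n // RowConsec g i ∨ RowRevConsec g i} +
    Nat.card {j : Fin n // ColConsec g j ∨ ColRevConsec g j}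

section LemmaM

variable {β : Type*} [Fintype β] [DecidableEq β]

/-- counting functions with prescribed fiber cardinalities, sigma-model case -/
lemma card_fiber_functions_aux (c : β → ℕ) :
    Fintype.card {f : (Σ b : β, Fin (c b)) → β //
        ∀ b, Fintype.card {a // f a = b} = c b} * ∏ b, (c b)! =
      (Fintype.card (Σ b : β, Fin (c b)))! := by
  classical
  set α := (Σ b : β, Fin (c b))
  set g0 : α → β := Sigma.fst with hg0def
  have hg0 : ∀ b, Fintype.card {a : α // g0 a = b} = c b := by
    intro b
    have e : {a : α // g0 a = b} ≃ Fin (c b) :=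
      { toFun := fun s => Fin.cast (congrArg c s.2) s.1.2
        invFun := fun v => ⟨⟨b, v⟩, rfl⟩
        left_inv := by rintro ⟨⟨b', v⟩, rfl⟩; rfl
        right_inv := by intro v; rfl }
    exact (Fintype.card_congr e).trans (Fintype.card_fin _)
  set Sub := {f : α → β // ∀ b, Fintype.card {a // f a = b} = c b} with hSub
  have hΦmem : ∀ σ : Equiv.Perm α, ∀ b, Fintype.card {a // g0 (σ a) = b} = c b := by
    intro σ b
    exact (Fintype.card_congr (Equiv.subtypeEquiv σ (fun a => Iff.rfl))).trans (hg0 b)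
  set Φ : Equiv.Perm α → Sub := fun σ => ⟨g0 ∘ σ, fun b => hΦmem σ b⟩ with hΦ
  -- surjectivity
  have hsurj : ∀ y : Sub, ∃ σ, Φ σ = y := by
    intro ⟨f, hf⟩
    have e : ∀ b, {a // g0 a = b} ≃ {a // f a = b} :=
      fun b => Fintype.equivOfCardEq (by rw [hg0 b, hf b])
    refine ⟨(Equiv.ofFiberEquiv e).symm, ?_⟩
    ext a
    show g0 ((Equiv.ofFiberEquiv e).symm a) = f a
    have h := Equiv.ofFiberEquiv_map e ((Equiv.ofFiberEquiv e).symm a)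
    rw [Equiv.apply_symm_apply] at h
    exact h.symm
  -- fibers of Φ have cardinality ∏ (c b)!
  have hfiber : ∀ y : Sub, Fintype.card {σ // Φ σ = y} = ∏ b, (c b)! := by
    intro y
    obtain ⟨σ0, hσ0⟩ := hsurj y
    have key : ∀ σ, Φ σ = y ↔ g0 ∘ σ = y.1 := fun σ => Subtype.ext_iff
    have e : {σ // Φ σ = y} ≃ {τ : Equiv.Perm α // g0 ∘ τ = g0} := by
      refine Equiv.trans (Equiv.subtypeEquivRight (fun σ => key σ)) ?_
      refine { toFun := fun σ => ⟨σ0.symm.trans σ.1, ?_⟩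
               invFun := fun τ => ⟨σ0.trans τ.1, ?_⟩
               left_inv := ?_, right_inv := ?_ }
      · funext a
        have h0 : g0 ∘ σ0 = y.1 := congrArg Subtype.val hσ0
        have h1 : g0 ∘ σ.1 = y.1 := σ.2
        calc g0 (σ.1 (σ0.symm a)) = y.1 (σ0.symm a) := congrFun h1 _
          _ = g0 (σ0 (σ0.symm a)) := (congrFun h0 _).symm
          _ = g0 a := by rw [Equiv.apply_symm_apply]
      · funext a
        have h0 : g0 ∘ σ0 = y.1 := congrArg Subtype.val hσ0
        calc g0 (τ.1 (σ0 a)) = g0 (σ0 a) := congrFun τ.2 _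
          _ = y.1 a := congrFun h0 a
      · rintro ⟨σ, hσ⟩
        apply Subtype.ext; apply Equiv.ext; intro a
        simp
      · rintro ⟨τ, hτ⟩
        apply Subtype.ext; apply Equiv.ext; intro a
        simp
    rw [Fintype.card_congr e, DomMulAct.stabilizer_card g0]
    exact Finset.prod_congr rfl fun b _ => by rw [hg0 b]
  -- sum up
  have := Finset.card_eq_sum_card_fiberwise
    (f := Φ) (s := (Finset.univ : Finset (Equiv.Perm α))) (t := Finset.univ)
    (fun σ _ => Finset.mem_univ _)
  rw [← Fintype.card_perm]
  calc Fintype.card Sub * ∏ b, (c b)!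
      = ∑ y : Sub, ∏ b, (c b)! := by rw [Finset.sum_const, Finset.card_univ, smul_eq_mul]
    _ = ∑ y : Sub, Fintype.card {σ // Φ σ = y} := by
        exact Finset.sum_congr rfl fun y _ => (hfiber y).symm
    _ = ∑ y : Sub, #(Finset.univ.filter fun σ => Φ σ = y) := by
        exact Finset.sum_congr rfl fun y _ => by rw [Fintype.card_subtype]
    _ = Fintype.card (Equiv.Perm α) := by rw [← Finset.card_univ, this]

end LemmaM

lemma card_fiber_functions {α : Type*} [Fintype α] [DecidableEq α] {β : Type*} [Fintype β]
    [DecidableEq β] (c : β → ℕ) (hc : ∑ b, c b = Fintype.card α) :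
    Nat.card {f : α → β // ∀ b, Fintype.card {a // f a = b} = c b} * ∏ b, (c b)! =
      (Fintype.card α)! := by
  classical
  rw [Nat.card_eq_fintype_card]
  have hcard : Fintype.card (Σ b : β, Fin (c b)) = Fintype.card α := by
    simp [hc]
  have e : (Σ b : β, Fin (c b)) ≃ α := Fintype.equivOfCardEq hcard
  have key : {f : α → β // ∀ b, Fintype.card {a // f a = b} = c b} ≃
      {f : (Σ b : β, Fin (c b)) → β // ∀ b, Fintype.card {a // f a = b} = c b} := by
    refine { toFun := fun f => ⟨f.1 ∘ e, fun b => ?_⟩,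
             invFun := fun f => ⟨f.1 ∘ e.symm, fun b => ?_⟩, left_inv := ?_, right_inv := ?_ }
    · exact (Fintype.card_congr (Equiv.subtypeEquiv e (fun a => Iff.rfl))).trans (f.2 b)
    · exact (Fintype.card_congr (Equiv.subtypeEquiv e.symm (fun a => Iff.rfl))).trans (f.2 b)
    · intro f; apply Subtype.ext; funext a; simp
    · intro f; apply Subtype.ext; funext a; simp
  rw [Fintype.card_congr key, ← hcard]
  exact card_fiber_functions_aux c

/-- `RowT g i b`: row `i` is consecutive (if `b`) or reverse-consecutive (if `¬b`). -/
def RowT {n : ℕ} (g : Fin n → Fin n → Fin n) (i : Fin n) (b : Bool) : Prop :=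
  if b then RowConsec g i else RowRevConsec g i

lemma rowT_fiber_card {n : ℕ} {g : Fin n → Fin n → Fin n} {i : Fin n} {b : Bool}
    (h : RowT g i b) (v : Fin n) : Fintype.card {j : Fin n // g i j = v} = 1 := by
  have hn : 0 < n := v.pos
  rw [Fintype.card_eq_one_iff]
  cases b with
  | true =>
    refine ⟨⟨v, h v⟩, ?_⟩
    rintro ⟨j, hj⟩
    have := h j
    apply Subtype.ext
    simp only
    rw [this] at hj
    exact hj
  | false =>
    have hrev : RowRevConsec g i := h
    refine ⟨⟨⟨n - 1 - v.val, by omega⟩, ?_⟩, ?_⟩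
    · have h1 := hrev ⟨n - 1 - v.val, by omega⟩
      have h2 : (g i ⟨n - 1 - v.val, by omega⟩).val < n := Fin.is_lt _
      have h3 : v.val < n := v.is_lt
      apply Fin.ext
      simp only [Fin.val_mk] at h1 ⊢
      omega
    · rintro ⟨j, hj⟩
      have h1 := hrev j
      have h3 : v.val < n := v.is_lt
      apply Subtype.ext
      apply Fin.ext
      have : (g i j).val = v.val := congrArg Fin.val hj
      simp only [Fin.val_mk]
      omega

/-- Cell-fiber decomposition for a square whose rows in `S` are lines. -/
lemma cell_fiber_split {n : ℕ} (S : Finset (Fin n)) (t : Fin n → Bool)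
    (g : Fin n → Fin n → Fin n) (hl : ∀ i ∈ S, RowT g i (t i)) (v : Fin n) :
    Fintype.card {p : Fin n × Fin n // g p.1 p.2 = v} =
      S.card + Fintype.card {p : (↥(Sᶜ)) × Fin n // g p.1.1 p.2 = v} := by
  classical
  have e1 : {p : Fin n × Fin n // g p.1 p.2 = v} ≃ Σ i : Fin n, {j : Fin n // g i j = v} :=
    Equiv.subtypeProdEquivSigmaSubtype (fun i j => g i j = v)
  have e2 : {p : (↥(Sᶜ)) × Fin n // g p.1.1 p.2 = v} ≃
      Σ i : ↥(Sᶜ), {j : Fin n // g i.1 j = v} :=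
    Equiv.subtypeProdEquivSigmaSubtype (fun (i : ↥(Sᶜ)) (j : Fin n) => g i.1 j = v)
  rw [Fintype.card_congr e1, Fintype.card_congr e2, Fintype.card_sigma, Fintype.card_sigma]
  rw [Finset.sum_coe_sort (Sᶜ) (fun i => Fintype.card {j : Fin n // g i j = v})]
  rw [← Finset.sum_add_sum_compl S (fun i => Fintype.card {j : Fin n // g i j = v})]
  congr 1
  rw [Finset.sum_congr rfl (fun i hi => rowT_fiber_card (hl i hi) v)]
  simp

set_option maxHeartbeats 1000000 in
lemma atLeast_card (n : ℕ) (S : Finset (Fin n)) (t : Fin n → Bool) :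
    Nat.card {g : Fin n → Fin n → Fin n //
        IsEquiSquare n g ∧ ∀ i ∈ S, RowT g i (t i)} * ((n - #S)!) ^ n =
      (n * (n - #S))! := by
  classical
  rcases Nat.eq_zero_or_pos n with rfl | hn
  · have h1 : Nat.card {g : Fin 0 → Fin 0 → Fin 0 //
        IsEquiSquare 0 g ∧ ∀ i ∈ S, RowT g i (t i)} = 1 := by
      rw [Nat.card_eq_one_iff_unique]
      constructor
      · constructor
        intro a b
        apply Subtype.ext
        funext i
        exact i.elim0
      · exact ⟨⟨fun i => i.elim0, fun k => k.elim0, fun i _ => i.elim0⟩⟩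
    rw [h1]
    simp
  have hSn : #S ≤ n := by simpa using Finset.card_le_univ S
  set m := n - #S with hm
  let rev : Fin n → Fin n := fun j => ⟨n - 1 - j.val, by omega⟩
  let ext : ((↥(Sᶜ)) × Fin n → Fin n) → (Fin n → Fin n → Fin n) := fun h i j =>
    if hi : i ∈ S then (if t i then j else rev j) else h (⟨i, Finset.mem_compl.mpr hi⟩, j)
  have hext : ∀ h (p : (↥(Sᶜ)) × Fin n), ext h p.1.1 p.2 = h p := by
    rintro h ⟨⟨i, hi⟩, j⟩
    have hi' : ¬ i ∈ S := Finset.mem_compl.mp hi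
    simp only [ext, dif_neg hi']
  have hlines : ∀ h, ∀ i ∈ S, RowT (ext h) i (t i) := by
    intro h i hi
    unfold RowT
    cases ht : t i with
    | true =>
      simp only [if_true]
      intro j
      simp only [ext, dif_pos hi, ht, if_true]
    | false =>
      simp only [Bool.false_eq_true, if_false]
      intro j
      have hj := j.is_lt
      simp only [ext, dif_pos hi, ht, Bool.false_eq_true, if_false, rev]
      omega
  have hfwd : ∀ g : Fin n → Fin n → Fin n, IsEquiSquare n g → (∀ i ∈ S, RowT g i (t i)) →
      ∀ v, Fintype.card {a : (↥(Sᶜ)) × Fin n // g a.1.1 a.2 = v} = m := by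
    intro g hg hl v
    have h1 := hg v
    rw [Nat.card_eq_fintype_card, cell_fiber_split S t g hl v] at h1
    omega
  have hequi : ∀ h : (↥(Sᶜ)) × Fin n → Fin n,
      (∀ v, Fintype.card {a // h a = v} = m) → IsEquiSquare n (ext h) := by
    intro h hh v
    rw [Nat.card_eq_fintype_card, cell_fiber_split S t (ext h) (hlines h) v]
    have hcc : Fintype.card {p : (↥(Sᶜ)) × Fin n // (ext h) p.1.1 p.2 = v} =
        Fintype.card {a // h a = v} :=
      Fintype.card_congr (Equiv.subtypeEquivRight (fun p => by rw [hext h p]))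
    rw [hcc, hh v]
    omega
  have E : {g : Fin n → Fin n → Fin n // IsEquiSquare n g ∧ ∀ i ∈ S, RowT g i (t i)} ≃
      {h : (↥(Sᶜ)) × Fin n → Fin n // ∀ v, Fintype.card {a // h a = v} = m} := by
    refine { toFun := fun g => ⟨fun p => g.1 p.1.1 p.2, fun v => hfwd g.1 g.2.1 g.2.2 v⟩
             invFun := fun h => ⟨ext h.1, hequi h.1 h.2, hlines h.1⟩
             left_inv := ?_, right_inv := ?_ }
    · rintro ⟨g, hg, hl⟩
      apply Subtype.ext
      funext i j
      show ext (fun p => g p.1.1 p.2) i j = g i j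
      by_cases hi : i ∈ S
      · simp only [ext, dif_pos hi]
        have h := hl i hi
        cases ht : t i with
        | true =>
          rw [ht] at h
          simp only [if_true]
          exact ((h : RowConsec g i) j).symm
        | false =>
          rw [ht] at h
          simp only [Bool.false_eq_true, if_false]
          have h1 := (h : RowRevConsec g i) j
          have hj := j.is_lt
          have hgj := (g i j).is_lt
          apply Fin.ext
          show n - 1 - j.val = (g i j).val
          omega
      · simp only [ext, dif_neg hi]
    · rintro ⟨h, hh⟩
      apply Subtype.ext
      funext p
      exact hext h p
  rw [Nat.card_congr E]
  have hc : ∑ _v : Fin n, m = Fintype.card ((↥(Sᶜ)) × Fin n) := by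
    simp [Finset.card_compl, mul_comm, hm]
  have hkey := card_fiber_functions (fun _ : Fin n => m) hc
  rw [Finset.prod_const, Finset.card_univ, Fintype.card_fin] at hkey
  calc Nat.card {h : (↥(Sᶜ)) × Fin n → Fin n //
        ∀ v, Fintype.card {a // h a = v} = m} * (m)! ^ n
      = (Fintype.card ((↥(Sᶜ)) × Fin n))! := hkey
    _ = (n * m)! := by congr 1; simp [Finset.card_compl, mul_comm, hm]

def RowLine {n : ℕ} (g : Fin n → Fin n → Fin n) (i : Fin n) : Prop :=
  RowConsec g i ∨ RowRevConsec g i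

def ColLine {n : ℕ} (g : Fin n → Fin n → Fin n) (j : Fin n) : Prop :=
  ColConsec g j ∨ ColRevConsec g j

lemma exists_three {n : ℕ} {P : Fin n → Prop} (h : 3 ≤ Nat.card {i // P i}) :
    ∃ a b c : Fin n, a ≠ b ∧ a ≠ c ∧ b ≠ c ∧ P a ∧ P b ∧ P c := by
  classical
  rw [Nat.card_eq_fintype_card, Fintype.card_subtype] at h
  obtain ⟨u, hu, hcard⟩ := Finset.exists_subset_card_eq h
  rw [Finset.card_eq_three] at hcard
  obtain ⟨a, b, c, hab, hac, hbc, rfl⟩ := hcard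
  have hP : ∀ x ∈ ({a, b, c} : Finset (Fin n)), P x :=
    fun x hx => (Finset.mem_filter.mp (hu hx)).2
  exact ⟨a, b, c, hab, hac, hbc, hP a (by simp), hP b (by simp), hP c (by simp)⟩

lemma rowLine_colLine {n : ℕ} {g : Fin n → Fin n → Fin n} {i j : Fin n}
    (hr : RowLine g i) (hc : ColLine g j) : i.val = j.val ∨ i.val + j.val + 1 = n := by
  rcases hr with hr | hr <;> rcases hc with hc | hc
  · left
    have h1 := hc i
    rw [hr j] at h1
    exact (congrArg Fin.val h1).symm
  · right
    have h1 := hc i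
    have h2 := congrArg Fin.val (hr j)
    omega
  · right
    have h1 := hr j
    have h2 := congrArg Fin.val (hc i)
    omega
  · left
    have h1 := hr j
    have h2 := hc i
    omega

lemma colLine_free {n : ℕ} {g : Fin n → Fin n → Fin n}
    (h : 3 ≤ Nat.card {i : Fin n // RowLine g i}) (j : Fin n) : ¬ ColLine g j := by
  intro hc
  obtain ⟨a, b, c, hab, hac, hbc, ha, hb, hc'⟩ := exists_three h
  have h1 := rowLine_colLine ha hc
  have h2 := rowLine_colLine hb hc
  have h3 := rowLine_colLine hc' hc
  have hab' : a.val ≠ b.val := fun h => hab (Fin.ext h)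
  have hac' : a.val ≠ c.val := fun h => hac (Fin.ext h)
  have hbc' : b.val ≠ c.val := fun h => hbc (Fin.ext h)
  omega

lemma rowLine_free {n : ℕ} {g : Fin n → Fin n → Fin n}
    (h : 3 ≤ Nat.card {j : Fin n // ColLine g j}) (i : Fin n) : ¬ RowLine g i := by
  intro hr
  obtain ⟨a, b, c, hab, hac, hbc, ha, hb, hc'⟩ := exists_three h
  have h1 := rowLine_colLine hr ha
  have h2 := rowLine_colLine hr hb
  have h3 := rowLine_colLine hr hc'
  have hab' : a.val ≠ b.val := fun h => hab (Fin.ext h)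
  have hac' : a.val ≠ c.val := fun h => hac (Fin.ext h)
  have hbc' : b.val ≠ c.val := fun h => hbc (Fin.ext h)
  omega

lemma count_structure {n x : ℕ} {g : Fin n → Fin n → Fin n} (hx : 4 < x)
    (h : consecLineCount g = x) :
    (Nat.card {i : Fin n // RowLine g i} = x ∧ Nat.card {j : Fin n // ColLine g j} = 0) ∨
      (Nat.card {i : Fin n // RowLine g i} = 0 ∧ Nat.card {j : Fin n // ColLine g j} = x) := by
  have hsum : Nat.card {i : Fin n // RowLine g i} + Nat.card {j : Fin n // ColLine g j} = x := h
  by_cases h3 : 3 ≤ Nat.card {i : Fin n // RowLine g i}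
  · left
    have : IsEmpty {j : Fin n // ColLine g j} :=
      ⟨fun j => colLine_free h3 j.1 j.2⟩
    have h0 : Nat.card {j : Fin n // ColLine g j} = 0 := Nat.card_of_isEmpty
    exact ⟨by omega, h0⟩
  · by_cases h3' : 3 ≤ Nat.card {j : Fin n // ColLine g j}
    · right
      have : IsEmpty {i : Fin n // RowLine g i} :=
        ⟨fun i => rowLine_free h3' i.1 i.2⟩
      have h0 : Nat.card {i : Fin n // RowLine g i} = 0 := Nat.card_of_isEmpty
      exact ⟨h0, by omega⟩
    · omega

lemma rowT_rowLine {n : ℕ} {g : Fin n → Fin n → Fin n} {i : Fin n} {b : Bool}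
    (h : RowT g i b) : RowLine g i := by
  cases b
  · exact Or.inr h
  · exact Or.inl h

lemma not_rowConsec_and_rev {n : ℕ} (hn : 2 ≤ n) {g : Fin n → Fin n → Fin n} {i : Fin n}
    (h1 : RowConsec g i) (h2 : RowRevConsec g i) : False := by
  have e1 := congrArg Fin.val (h1 ⟨0, by omega⟩)
  have e2 := h2 ⟨0, by omega⟩
  simp only [Fin.val_mk] at e1 e2
  omega

lemma nat_card_subtype {γ : Type*} [Fintype γ] (P : γ → Prop) [DecidablePred P] :
    Nat.card {g : γ // P g} = #(Finset.univ.filter P) := by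
  rw [Nat.card_eq_fintype_card, Fintype.card_subtype]

lemma nat_card_subtype_subtype {γ : Type*} [Fintype γ] (Q P : γ → Prop) [DecidablePred Q]
    [DecidablePred (fun g : {g : γ // Q g} => P g.1)] :
    #(Finset.univ.filter (fun g : {g : γ // Q g} => P g.1)) = Nat.card {g : γ // Q g ∧ P g} := by
  rw [← Fintype.card_subtype, ← Nat.card_eq_fintype_card]
  exact Nat.card_congr (Equiv.subtypeSubtypeEquivSubtypeInter Q P)

lemma mem_inf_finsets {α ι : Type*} [Fintype α] [DecidableEq α] (s : Finset ι)
    (f : ι → Finset α) (a : α) : a ∈ s.inf f ↔ ∀ i ∈ s, a ∈ f i := by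
  classical
  induction s using Finset.induction_on with
  | empty => simp
  | @insert i s hi ih => rw [Finset.inf_insert]; simp [ih]

lemma card_bool_fun_supported {n : ℕ} (S : Finset (Fin n)) :
    #(Finset.univ.filter (fun u : Fin n → Bool => ∀ i ∉ S, u i = false)) = 2 ^ #S := by
  classical
  rw [← Fintype.card_subtype]
  have e : {u : Fin n → Bool // ∀ i ∉ S, u i = false} ≃ (↥S → Bool) := by
    refine { toFun := fun u i => u.1 i.1
             invFun := fun v => ⟨fun i => if h : i ∈ S then v ⟨i, h⟩ else false,
               fun i hi => dif_neg hi⟩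
             left_inv := ?_, right_inv := ?_ }
    · rintro ⟨u, hu⟩
      apply Subtype.ext
      funext i
      by_cases hi : i ∈ S
      · simp [dif_pos hi]
      · simp [dif_neg hi, hu i hi]
    · intro v
      funext ⟨i, hi⟩
      simp [dif_pos hi]
  rw [Fintype.card_congr e, Fintype.card_fun, Fintype.card_bool, Fintype.card_coe]

lemma exact_card_eq {n x : ℕ} (hn2 : 2 ≤ n) {S : Finset (Fin n)} {t : Fin n → Bool}
    (hS : #S = x) :
    (Nat.card {g : Fin n → Fin n → Fin n //
        IsEquiSquare n g ∧ (∀ i ∈ S, RowT g i (t i)) ∧ ∀ i ∉ S, ¬ RowLine g i} : ℚ) =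
      ∑ k ∈ Finset.range (n - x + 1), (-2 : ℚ) ^ k * ((n - x).choose k : ℚ) *
        ((n * (n - x - k))! : ℚ) / ((n - x - k)! : ℚ) ^ n := by
  classical
  -- `W`-values: at-least counts, in ℚ
  have hW : ∀ (U : Finset (Fin n)), U ⊆ Sᶜ → ∀ u : Fin n → Bool,
      (Nat.card {g : Fin n → Fin n → Fin n // IsEquiSquare n g ∧
        ∀ i ∈ S ∪ U, RowT g i (if i ∈ U then u i else t i)} : ℚ) =
      ((n * (n - x - #U))! : ℚ) / ((n - x - #U)! : ℚ) ^ n := by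
    intro U hU u
    have hdisj : Disjoint S U := by
      rw [Finset.disjoint_right]
      intro a haU haS
      exact (Finset.mem_compl.mp (hU haU)) haS
    have hcard : #(S ∪ U) = x + #U := by
      rw [Finset.card_union_of_disjoint hdisj, hS]
    have hkey := atLeast_card n (S ∪ U) (fun i => if i ∈ U then u i else t i)
    rw [hcard] at hkey
    have hsub : n - (x + #U) = n - x - #U := by omega
    rw [hsub] at hkey
    have hfac : ((n - x - #U)! : ℚ) ^ n ≠ 0 := by positivity
    rw [eq_div_iff hfac]
    exact_mod_cast hkey
  set B := {g : Fin n → Fin n → Fin n // IsEquiSquare n g ∧ ∀ i ∈ S, RowT g i (t i)} with hB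
  set L : Fin n → Finset B := fun i => Finset.univ.filter (fun g => RowLine g.1 i) with hL
  -- the exact set as an intersection of complements
  have hEx : (Finset.univ.filter (fun g : B => ∀ i ∉ S, ¬ RowLine g.1 i)) =
      (Sᶜ).inf (fun i => (L i)ᶜ) := by
    ext g
    rw [Finset.mem_filter]
    rw [mem_inf_finsets]
    simp only [Finset.mem_univ, true_and, Finset.mem_compl, hL, Finset.mem_filter]
  -- per-`U` evaluation
  have hUval : ∀ U ∈ (Sᶜ).powerset,
      (#(U.inf L) : ℚ) = 2 ^ #U * (((n * (n - x - #U))! : ℚ) / ((n - x - #U)! : ℚ) ^ n) := by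
    intro U hUp
    have hUsub : U ⊆ Sᶜ := Finset.mem_powerset.mp hUp
    have hUL : U.inf L = Finset.univ.filter (fun g : B => ∀ i ∈ U, RowLine g.1 i) := by
      ext g
      rw [mem_inf_finsets]
      simp [hL]
    have hpart := Finset.card_eq_sum_card_fiberwise
      (f := fun g : B => (fun i : ↥U => decide (RowConsec g.1 i.1)))
      (s := U.inf L) (t := Finset.univ) (fun g _ => Finset.mem_univ _)
    have hfib : ∀ v : ↥U → Bool,
        #((U.inf L).filter (fun g : B => (fun i : ↥U => decide (RowConsec g.1 i.1)) = v)) =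
        Nat.card {g : Fin n → Fin n → Fin n // IsEquiSquare n g ∧
          ∀ i ∈ S ∪ U, RowT g i (if i ∈ U then
            (fun i' => if h : i' ∈ U then v ⟨i', h⟩ else false) i else t i)} := by
      intro v
      rw [hUL, Finset.filter_filter]
      rw [nat_card_subtype_subtype
        (Q := fun g => IsEquiSquare n g ∧ ∀ i ∈ S, RowT g i (t i))
        (P := fun g => (∀ i ∈ U, RowLine g i) ∧
          (fun i : ↥U => decide (RowConsec g i.1)) = v)]
      refine Nat.card_congr (Equiv.subtypeEquivRight ?_)
      intro g
      constructor
      · rintro ⟨⟨hequi, hlines⟩, hUline, hdec⟩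
        refine ⟨hequi, ?_⟩
        intro i hi
        rcases Finset.mem_union.mp hi with hiS | hiU
        · have hiU' : i ∉ U := fun h =>
            (Finset.mem_compl.mp (hUsub h)) hiS
          simp only [if_neg hiU']
          exact hlines i hiS
        · simp only [if_pos hiU, dif_pos hiU]
          have hd := congrFun hdec ⟨i, hiU⟩
          simp only at hd
          cases hv : v ⟨i, hiU⟩ with
          | true =>
            rw [hv] at hd
            have : RowConsec g i := of_decide_eq_true hd
            exact this
          | false =>
            rw [hv] at hd
            have hnc : ¬ RowConsec g i := of_decide_eq_false hd
            rcases hUline i hiU with hc | hr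
            · exact absurd hc hnc
            · exact hr
      · rintro ⟨hequi, hall⟩
        have hUline : ∀ i ∈ U, RowLine g i := by
          intro i hi
          have := hall i (Finset.mem_union_right _ hi)
          simp only [if_pos hi, dif_pos hi] at this
          exact rowT_rowLine this
        refine ⟨⟨hequi, ?_⟩, hUline, ?_⟩
        · intro i hi
          have hiU' : i ∉ U := fun h => (Finset.mem_compl.mp (hUsub h)) hi
          have := hall i (Finset.mem_union_left _ hi)
          simp only [if_neg hiU'] at this
          exact this
        · funext i
          obtain ⟨i, hi⟩ := i
          have := hall i (Finset.mem_union_right _ hi)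
          simp only [if_pos hi, dif_pos hi] at this
          simp only
          cases hv : v ⟨i, hi⟩ with
          | true =>
            rw [hv] at this
            exact decide_eq_true this
          | false =>
            rw [hv] at this
            have : RowRevConsec g i := this
            exact decide_eq_false (fun hc => not_rowConsec_and_rev hn2 hc this)
    have hsum : (#(U.inf L) : ℚ) = ∑ v : ↥U → Bool,
        (((n * (n - x - #U))! : ℚ) / ((n - x - #U)! : ℚ) ^ n) := by
      rw [hpart]
      push_cast
      refine Finset.sum_congr rfl ?_
      intro v _
      rw [hfib v]
      exact hW U hUsub (fun i' => if h : i' ∈ U then v ⟨i', h⟩ else false)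
    rw [hsum, Finset.sum_const, Finset.card_univ, Fintype.card_fun, Fintype.card_bool,
      Fintype.card_coe, nsmul_eq_mul]
    push_cast
    ring_nf
  -- inclusion-exclusion
  have hIE := Finset.inclusion_exclusion_card_inf_compl (Sᶜ) L
  rw [← hEx] at hIE
  have hIEQ : (#(Finset.univ.filter (fun g : B => ∀ i ∉ S, ¬ RowLine g.1 i)) : ℚ) =
      ∑ U ∈ (Sᶜ).powerset, (-1 : ℚ) ^ #U * #(U.inf L) := by
    exact_mod_cast hIE
  -- identify LHS
  have hLHS : #(Finset.univ.filter (fun g : B => ∀ i ∉ S, ¬ RowLine g.1 i)) =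
      Nat.card {g : Fin n → Fin n → Fin n //
        IsEquiSquare n g ∧ (∀ i ∈ S, RowT g i (t i)) ∧ ∀ i ∉ S, ¬ RowLine g i} := by
    rw [nat_card_subtype_subtype
      (Q := fun g => IsEquiSquare n g ∧ ∀ i ∈ S, RowT g i (t i))
      (P := fun g => ∀ i ∉ S, ¬ RowLine g i)]
    exact Nat.card_congr (Equiv.subtypeEquivRight (fun g => and_assoc))
  rw [hLHS] at hIEQ
  rw [hIEQ]
  rw [Finset.sum_congr rfl (fun U hU => by rw [hUval U hU])]
  rw [Finset.sum_powerset]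
  have hcompl : #(Sᶜ) = n - x := by
    rw [Finset.card_compl, Fintype.card_fin, hS]
  rw [hcompl]
  refine Finset.sum_congr rfl ?_
  intro k hk
  rw [Finset.sum_congr rfl (fun U hU => by
    rw [(Finset.mem_powersetCard.mp hU).2])]
  rw [Finset.sum_const, Finset.card_powersetCard, hcompl, nsmul_eq_mul]
  have h2 : ((-2 : ℚ)) ^ k = (-1) ^ k * 2 ^ k := by rw [← neg_one_mul, mul_pow]
  push_cast
  rw [h2]
  ring

lemma nat_card_or {γ : Type*} [Fintype γ] (P Q : γ → Prop) (h : ∀ g, ¬(P g ∧ Q g)) :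
    Nat.card {g : γ // P g ∨ Q g} = Nat.card {g : γ // P g} + Nat.card {g : γ // Q g} := by
  classical
  rw [nat_card_subtype, nat_card_subtype, nat_card_subtype, Finset.filter_or]
  exact Finset.card_union_of_disjoint
    ((Finset.disjoint_filter).mpr (fun g _ hP hQ => h g ⟨hP, hQ⟩))

lemma transpose_equi {n : ℕ} {g : Fin n → Fin n → Fin n} (hg : IsEquiSquare n g) :
    IsEquiSquare n (fun i j => g j i) := by
  intro k
  exact (Nat.card_congr (Equiv.subtypeEquiv (Equiv.prodComm (Fin n) (Fin n))
    (fun p => Iff.rfl))).trans (hg k)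

lemma nat_card_transpose {n x : ℕ} :
    Nat.card {g : Fin n → Fin n → Fin n // IsEquiSquare n g ∧
        (Nat.card {i : Fin n // RowLine g i} = 0 ∧ Nat.card {j : Fin n // ColLine g j} = x)} =
      Nat.card {g : Fin n → Fin n → Fin n // IsEquiSquare n g ∧
        (Nat.card {i : Fin n // RowLine g i} = x ∧ Nat.card {j : Fin n // ColLine g j} = 0)} := by
  refine Nat.card_congr ?_
  have hrow : ∀ g : Fin n → Fin n → Fin n,
      Nat.card {i : Fin n // RowLine (fun i j => g j i) i} =
        Nat.card {j : Fin n // ColLine g j} :=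
    fun g => Nat.card_congr (Equiv.subtypeEquivRight (fun i => Iff.rfl))
  have hcol : ∀ g : Fin n → Fin n → Fin n,
      Nat.card {j : Fin n // ColLine (fun i j => g j i) j} =
        Nat.card {i : Fin n // RowLine g i} :=
    fun g => Nat.card_congr (Equiv.subtypeEquivRight (fun i => Iff.rfl))
  refine { toFun := fun g => ⟨fun i j => g.1 j i, transpose_equi g.2.1,
             by rw [hrow]; exact g.2.2.2, by rw [hcol]; exact g.2.2.1⟩
           invFun := fun g => ⟨fun i j => g.1 j i, transpose_equi g.2.1,
             by rw [hrow]; exact g.2.2.2, by rw [hcol]; exact g.2.2.1⟩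
           left_inv := ?_, right_inv := ?_ }
  · rintro ⟨g, hg⟩; rfl
  · rintro ⟨g, hg⟩; rfl

/-- For `4 < x ≤ n`, the number of equi-`n`-squares with exactly `x` consecutive or
reverse-consecutive lines. -/
theorem card_equiSquares_lineCount_gt_four (n x : ℕ) (hn : 1 ≤ n) (hx : 4 < x)
    (hxn : x ≤ n) :
    (Nat.card {g : Fin n → Fin n → Fin n //
        IsEquiSquare n g ∧ consecLineCount g = x} : ℚ) =
      2 ^ (x + 1) * (n.choose x : ℚ) *
        ∑ k ∈ Finset.range (n - x + 1), (-2 : ℚ) ^ k * ((n - x).choose k : ℚ) *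
          ((n ^ 2 - n * x - n * k)! : ℚ) / ((n - x - k)! : ℚ) ^ n := by
  classical
  have hn2 : 2 ≤ n := by omega
  -- structure of squares with `x` lines
  have hstruct : ∀ g : Fin n → Fin n → Fin n,
      (IsEquiSquare n g ∧ consecLineCount g = x) ↔
      ((IsEquiSquare n g ∧ (Nat.card {i : Fin n // RowLine g i} = x ∧
          Nat.card {j : Fin n // ColLine g j} = 0)) ∨
       (IsEquiSquare n g ∧ (Nat.card {i : Fin n // RowLine g i} = 0 ∧
          Nat.card {j : Fin n // ColLine g j} = x))) := by
    intro g
    have hc : consecLineCount g =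
        Nat.card {i : Fin n // RowLine g i} + Nat.card {j : Fin n // ColLine g j} := rfl
    constructor
    · rintro ⟨he, hcount⟩
      rcases count_structure hx hcount with h | h
      · exact Or.inl ⟨he, h⟩
      · exact Or.inr ⟨he, h⟩
    · rintro (⟨he, h1, h2⟩ | ⟨he, h1, h2⟩) <;>
        · refine ⟨he, ?_⟩
          rw [hc, h1, h2]
          omega
  rw [Nat.card_congr (Equiv.subtypeEquivRight hstruct)]
  rw [nat_card_or _ _ (fun g => by rintro ⟨⟨_, h1, _⟩, ⟨_, h2, _⟩⟩; omega)]
  rw [nat_card_transpose]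
  -- drop the column condition
  have hdrop : Nat.card {g : Fin n → Fin n → Fin n // IsEquiSquare n g ∧
      (Nat.card {i : Fin n // RowLine g i} = x ∧ Nat.card {j : Fin n // ColLine g j} = 0)} =
      Nat.card {g : Fin n → Fin n → Fin n // IsEquiSquare n g ∧
        Nat.card {i : Fin n // RowLine g i} = x} := by
    refine Nat.card_congr (Equiv.subtypeEquivRight (fun g => ?_))
    constructor
    · rintro ⟨he, hr, _⟩; exact ⟨he, hr⟩
    · rintro ⟨he, hr⟩
      refine ⟨he, hr, ?_⟩
      have : IsEmpty {j : Fin n // ColLine g j} :=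
        ⟨fun j => colLine_free (by omega) j.1 j.2⟩
      exact Nat.card_of_isEmpty
  rw [hdrop]
  -- main computation
  have hmain : (Nat.card {g : Fin n → Fin n → Fin n // IsEquiSquare n g ∧
      Nat.card {i : Fin n // RowLine g i} = x} : ℚ) =
      (n.choose x : ℚ) * 2 ^ x *
        ∑ k ∈ Finset.range (n - x + 1), (-2 : ℚ) ^ k * ((n - x).choose k : ℚ) *
          ((n * (n - x - k))! : ℚ) / ((n - x - k)! : ℚ) ^ n := by
    rw [nat_card_subtype]
    set A := Finset.univ.filter (fun g : Fin n → Fin n → Fin n =>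
      IsEquiSquare n g ∧ Nat.card {i : Fin n // RowLine g i} = x) with hA
    have hpart1 := Finset.card_eq_sum_card_fiberwise
      (f := fun g : Fin n → Fin n → Fin n => Finset.univ.filter (fun i => RowLine g i))
      (s := A) (t := Finset.univ) (fun g _ => Finset.mem_univ _)
    -- fibers over sets of wrong size are empty
    have hempty : ∀ S' : Finset (Fin n), #S' ≠ x →
        A.filter (fun g => Finset.univ.filter (fun i => RowLine g i) = S') = ∅ := by
      intro S' hS'
      rw [Finset.filter_eq_empty_iff]
      intro g hg hfil
      rcases Finset.mem_filter.mp hg with ⟨_, _, hcard⟩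
      rw [nat_card_subtype (fun i => RowLine g i), hfil] at hcard
      exact hS' hcard
    -- fibers over sets of the right size
    have hfiber : ∀ S' : Finset (Fin n), #S' = x →
        (#(A.filter (fun g => Finset.univ.filter (fun i => RowLine g i) = S')) : ℚ) =
        2 ^ x * ∑ k ∈ Finset.range (n - x + 1), (-2 : ℚ) ^ k * ((n - x).choose k : ℚ) *
          ((n * (n - x - k))! : ℚ) / ((n - x - k)! : ℚ) ^ n := by
      intro S' hS'
      have hpart2 := Finset.card_eq_sum_card_fiberwise
        (f := fun g : Fin n → Fin n → Fin n => (fun i => decide (RowConsec g i)))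
        (s := A.filter (fun g => Finset.univ.filter (fun i => RowLine g i) = S'))
        (t := Finset.univ) (fun g _ => Finset.mem_univ _)
      -- fiber for a given type function `u`
      have hfib2 : ∀ u : Fin n → Bool,
          ((A.filter (fun g => Finset.univ.filter (fun i => RowLine g i) = S')).filter
            (fun g => (fun i => decide (RowConsec g i)) = u)) =
          if (∀ i ∉ S', u i = false) then
            Finset.univ.filter (fun g : Fin n → Fin n → Fin n => IsEquiSquare n g ∧
              (∀ i ∈ S', RowT g i (u i)) ∧ ∀ i ∉ S', ¬ RowLine g i)
          else ∅ := by
        intro u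
        rw [hA, Finset.filter_filter, Finset.filter_filter]
        split_ifs with hsupp
        · apply Finset.filter_congr
          intro g _
          constructor
          · rintro ⟨⟨he, hcard⟩, hfil, hdec⟩
            refine ⟨he, ?_, ?_⟩
            · intro i hi
              have hline : RowLine g i := by
                have : i ∈ Finset.univ.filter (fun i => RowLine g i) := by rw [hfil]; exact hi
                exact (Finset.mem_filter.mp this).2
              have hu : decide (RowConsec g i) = u i := congrFun hdec i
              cases hui : u i with
              | true =>
                rw [hui] at hu
                exact (of_decide_eq_true hu : RowConsec g i)
              | false =>
                rw [hui] at hu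
                have hnc : ¬ RowConsec g i := of_decide_eq_false hu
                rcases hline with hcon | hrev
                · exact absurd hcon hnc
                · exact hrev
            · intro i hi hline
              have : i ∈ Finset.univ.filter (fun i => RowLine g i) :=
                Finset.mem_filter.mpr ⟨Finset.mem_univ _, hline⟩
              rw [hfil] at this
              exact hi this
          · rintro ⟨he, hT, hnl⟩
            have hfil : Finset.univ.filter (fun i => RowLine g i) = S' := by
              ext i
              rw [Finset.mem_filter]
              constructor
              · rintro ⟨_, hline⟩
                by_contra hi
                exact hnl i hi hline
              · intro hi
                exact ⟨Finset.mem_univ _, rowT_rowLine (hT i hi)⟩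
            refine ⟨⟨he, ?_⟩, hfil, ?_⟩
            · rw [nat_card_subtype (fun i => RowLine g i), hfil, hS']
            · funext i
              by_cases hi : i ∈ S'
              · have := hT i hi
                cases hui : u i with
                | true =>
                  rw [hui] at this
                  exact decide_eq_true this
                | false =>
                  rw [hui] at this
                  exact decide_eq_false (fun hc =>
                    not_rowConsec_and_rev hn2 hc this)
              · rw [hsupp i hi]
                exact decide_eq_false (fun hc => hnl i hi (Or.inl hc))
        · rw [Finset.filter_eq_empty_iff]
          rintro g _ ⟨⟨he, hcard⟩, hfil, hdec⟩
          apply hsupp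
          intro i hi
          rw [← congrFun hdec i]
          refine decide_eq_false (fun hc => ?_)
          have : i ∈ Finset.univ.filter (fun i => RowLine g i) :=
            Finset.mem_filter.mpr ⟨Finset.mem_univ _, Or.inl hc⟩
          rw [hfil] at this
          exact hi this
      -- sum over type functions
      rw [hpart2]
      push_cast
      rw [Finset.sum_congr rfl (fun u _ => by rw [hfib2 u])]
      rw [← Finset.sum_filter_add_sum_filter_not Finset.univ
        (fun u : Fin n → Bool => ∀ i ∉ S', u i = false)]
      have hzero : ∑ u ∈ Finset.univ.filter
          (fun u : Fin n → Bool => ¬ ∀ i ∉ S', u i = false),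
          ((#(if (∀ i ∉ S', u i = false) then
            Finset.univ.filter (fun g : Fin n → Fin n → Fin n => IsEquiSquare n g ∧
              (∀ i ∈ S', RowT g i (u i)) ∧ ∀ i ∉ S', ¬ RowLine g i)
          else ∅) : ℕ) : ℚ) = 0 := by
        refine Finset.sum_eq_zero ?_
        intro u hu
        rw [if_neg (Finset.mem_filter.mp hu).2]
        simp
      rw [hzero, add_zero]
      have hval : ∀ u ∈ Finset.univ.filter
          (fun u : Fin n → Bool => ∀ i ∉ S', u i = false),
          ((#(if (∀ i ∉ S', u i = false) then
            Finset.univ.filter (fun g : Fin n → Fin n → Fin n => IsEquiSquare n g ∧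
              (∀ i ∈ S', RowT g i (u i)) ∧ ∀ i ∉ S', ¬ RowLine g i)
          else ∅) : ℕ) : ℚ) =
          ∑ k ∈ Finset.range (n - x + 1), (-2 : ℚ) ^ k * ((n - x).choose k : ℚ) *
            ((n * (n - x - k))! : ℚ) / ((n - x - k)! : ℚ) ^ n := by
        intro u hu
        rw [if_pos (Finset.mem_filter.mp hu).2]
        rw [← nat_card_subtype]
        exact exact_card_eq hn2 hS'
      rw [Finset.sum_congr rfl hval, Finset.sum_const, card_bool_fun_supported, hS',
        nsmul_eq_mul]
      push_cast
      ring
    -- combine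
    have hA2 : (#A : ℚ) = ∑ S' ∈ Finset.univ.filter (fun S' : Finset (Fin n) => #S' = x),
        (2 ^ x * ∑ k ∈ Finset.range (n - x + 1), (-2 : ℚ) ^ k * ((n - x).choose k : ℚ) *
          ((n * (n - x - k))! : ℚ) / ((n - x - k)! : ℚ) ^ n) := by
      rw [hpart1]
      push_cast
      rw [← Finset.sum_filter_add_sum_filter_not Finset.univ
        (fun S' : Finset (Fin n) => #S' = x)]
      have hz : ∑ S' ∈ Finset.univ.filter (fun S' : Finset (Fin n) => ¬ #S' = x),
          ((#(A.filter (fun g => Finset.univ.filter (fun i => RowLine g i) = S')) : ℕ) : ℚ)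
          = 0 := by
        refine Finset.sum_eq_zero ?_
        intro S' hS'
        rw [hempty S' (Finset.mem_filter.mp hS').2]
        simp
      rw [hz, add_zero]
      exact Finset.sum_congr rfl (fun S' hS' => hfiber S' (Finset.mem_filter.mp hS').2)
    rw [hA2, Finset.sum_const, nsmul_eq_mul]
    have hcount : #(Finset.univ.filter (fun S' : Finset (Fin n) => #S' = x)) = n.choose x := by
      rw [← Fintype.card_subtype]
      rw [Fintype.card_finset_len, Fintype.card_fin]
    rw [hcount]
    push_cast
    ring
  push_cast
  rw [hmain]
  have harith : ∀ k, n * (n - x - k) = n ^ 2 - n * x - n * k := by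
    intro k
    rw [Nat.mul_sub, Nat.mul_sub, pow_two]
  rw [Finset.sum_congr rfl (fun k _ => by rw [harith k])]
  rw [pow_succ]
  ring
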